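/- Let n ≥ 3 be an odd integer, let Maj_n : {−1,1}^n → {−1,1} be the majority function (Maj_n(x) = 1 if Σ_i x_i > 0 and −1 otherwise), and let S ⊆ [n] be such that |S| ≥ 3 and |S^c| is even. Then E_z[ √(W^{≤1}[Maj_n|_{S^c,z}]) ] ≤ 1 − 0.09/√n, where z is uniform on {−1,1}^{S^c}. -/

import Mathlib

/-- The `±1` value encoded by a Boolean: `true ↦ 1`, `false ↦ -1`. -/
def pmOfBool (b : Bool) : ℝ := if b then 1 else -1

/-- The Fourier character `χ_T(x) = ∏_{i ∈ T} x_i` on the Boolean cube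
(points of `{−1,1}^ι` encoded as `ι → Bool`). -/
def chi {ι : Type*} (T : Finset ι) (x : ι → Bool) : ℝ := ∏ i ∈ T, pmOfBool (x i)

/-- The Fourier coefficient `f̂(T) = E_x[f(x)·χ_T(x)]`. -/
noncomputable def fCoeff {ι : Type*} [Fintype ι] [DecidableEq ι]
    (f : (ι → Bool) → ℝ) (T : Finset ι) : ℝ :=
  (∑ x, f x * chi T x) / (Fintype.card (ι → Bool) : ℝ)

/-- The Fourier weight of `f` at levels `≤ k`: `W^{≤k}[f] = Σ_{|T| ≤ k} f̂(T)²`. -/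
noncomputable def weightLE {ι : Type*} [Fintype ι] [DecidableEq ι]
    (k : ℕ) (f : (ι → Bool) → ℝ) : ℝ :=
  ∑ T ∈ Finset.univ.filter (fun T : Finset ι => T.card ≤ k), (fCoeff f T) ^ 2

/-- The Fourier weight of `f` at levels `> k`: `W^{>k}[f] = Σ_{|T| > k} f̂(T)²`. -/
noncomputable def weightGT {ι : Type*} [Fintype ι] [DecidableEq ι]
    (k : ℕ) (f : (ι → Bool) → ℝ) : ℝ :=
  ∑ T ∈ Finset.univ.filter (fun T : Finset ι => k < T.card), (fCoeff f T) ^ 2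

/-- The (normalized) 2-norm `‖f‖₂ = (E_x[f(x)²])^{1/2}`. -/
noncomputable def l2norm {ι : Type*} [Fintype ι] [DecidableEq ι]
    (f : (ι → Bool) → ℝ) : ℝ :=
  Real.sqrt ((∑ x, (f x) ^ 2) / (Fintype.card (ι → Bool) : ℝ))

/-- The restriction `f|_{S,z}` of `f` obtained by fixing the coordinates in `S`
to the assignment `z`, viewed as a function of the remaining coordinates. -/
def restrictTo {ι : Type*} [Fintype ι] [DecidableEq ι] (f : (ι → Bool) → ℝ)
    (S : Finset ι) (z : {i // i ∈ S} → Bool) : ({i // i ∉ S} → Bool) → ℝ :=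
  fun y => f fun i => if h : i ∈ S then z ⟨i, h⟩ else y ⟨i, h⟩

/-- The majority function on `{−1,1}^n` (points encoded as `ι → Bool`):
`Maj(x) = 1` if `Σᵢ xᵢ > 0` and `−1` otherwise. -/
noncomputable def majFun {ι : Type*} [Fintype ι] : (ι → Bool) → ℝ :=
  fun x => if 0 < ∑ i, pmOfBool (x i) then 1 else -1


lemma cb_upper (r : ℕ) : (3*r+1) * (Nat.centralBinom r)^2 ≤ 16^r := by
  induction r with
  | zero => simp [Nat.centralBinom]
  | succ r ih =>
    have key : (2*(2*r+1))^2 * (3*(r+1)+1) * ((3*r+1) * (Nat.centralBinom r)^2)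
        ≤ (2*(2*r+1))^2 * (3*(r+1)+1) * 16^r := Nat.mul_le_mul_left _ ih
    have hrec : (r+1) * Nat.centralBinom (r+1) = 2 * (2*r+1) * Nat.centralBinom r :=
      Nat.succ_mul_centralBinom_succ r
    have hsq : (r+1)^2 * (Nat.centralBinom (r+1))^2 = (2*(2*r+1))^2 * (Nat.centralBinom r)^2 := by
      rw [← mul_pow, ← mul_pow, hrec]
    have hpoly : (2*(2*r+1))^2 * (3*(r+1)+1) ≤ 16 * (r+1)^2 * (3*r+1) := by nlinarith
    have h1 : (3*r+1) * ((3*(r+1)+1) * ((r+1)^2 * (Nat.centralBinom (r+1))^2))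
        ≤ (3*r+1) * ((r+1)^2 * 16^(r+1)) := by
      rw [hsq]; calc (3*r+1) * ((3*(r+1)+1) * ((2*(2*r+1))^2 * (Nat.centralBinom r)^2))
          = (2*(2*r+1))^2 * (3*(r+1)+1) * ((3*r+1) * (Nat.centralBinom r)^2) := by ring
        _ ≤ (2*(2*r+1))^2 * (3*(r+1)+1) * 16^r := key
        _ ≤ 16 * (r+1)^2 * (3*r+1) * 16^r := Nat.mul_le_mul_right _ hpoly
        _ = (3*r+1) * ((r+1)^2 * 16^(r+1)) := by ring
    have h2 := Nat.le_of_mul_le_mul_left h1 (by positivity)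
    have h3 := Nat.le_of_mul_le_mul_left (by
      calc (r+1)^2 * ((3*(r+1)+1) * (Nat.centralBinom (r+1))^2)
          = (3*(r+1)+1) * ((r+1)^2 * (Nat.centralBinom (r+1))^2) := by ring
        _ ≤ (r+1)^2 * 16^(r+1) := h2) (show 0 < (r+1)^2 by positivity)
    exact h3

lemma cb_lower (r : ℕ) (hr : 1 ≤ r) : 5 * 16^r ≤ (16*r+4) * (Nat.centralBinom r)^2 := by
  induction r with
  | zero => omega
  | succ r ih =>
    rcases Nat.eq_or_lt_of_le hr with h | h
    · simp [← h]; decide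
    · have hr' : 1 ≤ r := by omega
      have ih' := ih hr'
      have hrec : (r+1) * Nat.centralBinom (r+1) = 2 * (2*r+1) * Nat.centralBinom r :=
        Nat.succ_mul_centralBinom_succ r
      have hsq : (r+1)^2 * (Nat.centralBinom (r+1))^2 = (2*(2*r+1))^2 * (Nat.centralBinom r)^2 := by
        rw [← mul_pow, ← mul_pow, hrec]
      have hpoly : 16 * (r+1)^2 * (16*r+4) ≤ (2*(2*r+1))^2 * (16*(r+1)+4) := by nlinarith
      have h1 : (16*r+4) * ((r+1)^2 * (5 * 16^(r+1)))
          ≤ (16*r+4) * ((16*(r+1)+4) * ((r+1)^2 * (Nat.centralBinom (r+1))^2)) := by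
        rw [hsq]
        calc (16*r+4) * ((r+1)^2 * (5 * 16^(r+1)))
            = 16 * (r+1)^2 * ((16*r+4) * (5 * 16^r)) := by ring
          _ ≤ 16 * (r+1)^2 * ((16*r+4) * ((16*r+4) * (Nat.centralBinom r)^2)) := by
              exact Nat.mul_le_mul_left _ (Nat.mul_le_mul_left _ ih')
          _ = 16 * (r+1)^2 * (16*r+4) * ((16*r+4) * (Nat.centralBinom r)^2) := by ring
          _ ≤ (2*(2*r+1))^2 * (16*(r+1)+4) * ((16*r+4) * (Nat.centralBinom r)^2) :=
              Nat.mul_le_mul_right _ hpoly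
          _ = (16*r+4) * ((16*(r+1)+4) * ((2*(2*r+1))^2 * (Nat.centralBinom r)^2)) := by ring
      have h2 := Nat.le_of_mul_le_mul_left h1 (by positivity)
      have h3 := Nat.le_of_mul_le_mul_left (by
        calc (r+1)^2 * (5 * 16^(r+1)) ≤ (16*(r+1)+4) * ((r+1)^2 * (Nat.centralBinom (r+1))^2) := h2
          _ = (r+1)^2 * ((16*(r+1)+4) * (Nat.centralBinom (r+1))^2) := by ring)
        (show 0 < (r+1)^2 by positivity)
      exact h3




lemma pm_mul_self (b : Bool) : pmOfBool b * pmOfBool b = 1 := by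
  cases b <;> simp [pmOfBool]

lemma sum_chi_mul (x y : ι → Bool) [Fintype ι] [DecidableEq ι] :
    ∑ T : Finset ι, chi T x * chi T y
      = if x = y then (Fintype.card (ι → Bool) : ℝ) else 0 := by
  have h1 : ∀ T : Finset ι, chi T x * chi T y = ∏ i ∈ T, (pmOfBool (x i) * pmOfBool (y i)) := by
    intro T; rw [chi, chi, ← Finset.prod_mul_distrib]
  have h2 : ∑ T : Finset ι, chi T x * chi T y
      = ∏ i : ι, (pmOfBool (x i) * pmOfBool (y i) + 1) := by
    rw [Fintype.prod_add]
    simp only [Finset.prod_const_one, mul_one]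
    exact (Finset.sum_congr rfl fun T _ => (h1 T)).symm ▸ rfl
  rw [h2]
  by_cases hxy : x = y
  · subst hxy
    simp only [pm_mul_self, if_pos rfl]
    rw [Finset.prod_const]
    norm_num [Fintype.card_fun]
  · rw [if_neg hxy]
    obtain ⟨i, hi⟩ := Function.ne_iff.mp hxy
    apply Finset.prod_eq_zero (Finset.mem_univ i)
    cases hx : x i <;> cases hy : y i <;> simp_all [pmOfBool]

lemma parseval {ι : Type*} [Fintype ι] [DecidableEq ι] (f : (ι → Bool) → ℝ) :
    ∑ T : Finset ι, (fCoeff f T)^2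
      = (∑ x, (f x)^2) / (Fintype.card (ι → Bool) : ℝ) := by
  have hN : (0:ℝ) < (Fintype.card (ι → Bool) : ℝ) := by positivity
  have key : ∑ T : Finset ι, (∑ x, f x * chi T x)^2
      = (Fintype.card (ι → Bool) : ℝ) * ∑ x, (f x)^2 := by
    have : ∀ T : Finset ι, (∑ x, f x * chi T x)^2
        = ∑ x, ∑ y, (f x * f y) * (chi T x * chi T y) := by
      intro T
      rw [sq, Finset.sum_mul_sum]
      exact Finset.sum_congr rfl fun x _ => Finset.sum_congr rfl fun y _ => by ring
    simp_rw [this]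
    rw [Finset.sum_comm]
    have : ∀ x : ι → Bool, ∑ T : Finset ι, ∑ y, (f x * f y) * (chi T x * chi T y)
        = (Fintype.card (ι → Bool) : ℝ) * (f x)^2 := by
      intro x
      rw [Finset.sum_comm]
      have : ∀ y, ∑ T : Finset ι, (f x * f y) * (chi T x * chi T y)
          = (f x * f y) * (if x = y then (Fintype.card (ι → Bool) : ℝ) else 0) := by
        intro y; rw [← Finset.mul_sum, sum_chi_mul]
      simp_rw [this]
      simp only [mul_ite, mul_zero]
      rw [Finset.sum_ite_eq Finset.univ x]
      simp only [Finset.mem_univ, if_true, sq]; ring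
    simp_rw [this]
    rw [← Finset.mul_sum]
  simp_rw [fCoeff, div_pow]
  rw [← Finset.sum_div, key]
  field_simp

open Finset



lemma sum_pm {α : Type*} [Fintype α] [DecidableEq α] (x : α → Bool) :
    ∑ i, pmOfBool (x i)
      = 2 * ((univ.filter fun i => x i = true).card : ℝ) - Fintype.card α := by
  classical
  rw [← Finset.sum_filter_add_sum_filter_not univ (fun i => x i = true)]
  have h1 : ∀ i ∈ univ.filter fun i => x i = true, pmOfBool (x i) = 1 := by
    intro i hi; simp only [mem_filter] at hi; simp [pmOfBool, hi.2]
  have h2 : ∀ i ∈ univ.filter fun i => ¬(x i = true), pmOfBool (x i) = -1 := by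
    intro i hi; simp only [mem_filter] at hi
    simp [pmOfBool, Bool.eq_false_iff.mpr fun h => hi.2 h]
  rw [Finset.sum_congr rfl h1, Finset.sum_congr rfl h2, Finset.sum_const, Finset.sum_const]
  have hc := Finset.card_filter_add_card_filter_not (s := (univ : Finset α))
    (p := fun i => x i = true)
  rw [Finset.card_univ] at hc
  have : ((univ.filter fun i => ¬(x i = true)).card : ℝ)
      = (Fintype.card α : ℝ) - ((univ.filter fun i => x i = true).card : ℝ) := by
    have := hc
    push_cast [← this]
    ring
  simp only [nsmul_eq_mul, mul_one, mul_neg_one, this]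
  ring

lemma maj_eq_one {ι : Type*} [Fintype ι] (x : ι → Bool) (h : 0 < ∑ i, pmOfBool (x i)) :
    majFun x = 1 := if_pos h

lemma maj_eq_neg_one {ι : Type*} [Fintype ι] (x : ι → Bool) (h : ¬ 0 < ∑ i, pmOfBool (x i)) :
    majFun x = -1 := if_neg h

lemma maj_sq {ι : Type*} [Fintype ι] (x : ι → Bool) : (majFun x)^2 = 1 := by
  unfold majFun; split <;> norm_num

-- antisymmetry: n odd ⇒ E[maj] = 0
lemma sum_maj_eq_zero {ι : Type*} [Fintype ι] [DecidableEq ι] (hodd : Odd (Fintype.card ι)) :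
    ∑ x : ι → Bool, majFun x = 0 := by
  classical
  have hne : ∀ x : ι → Bool, ∑ i, pmOfBool (x i) ≠ 0 := by
    intro x hx
    rw [sum_pm] at hx
    obtain ⟨k, hk⟩ := hodd
    rw [hk] at hx
    push_cast at hx
    have h2 : ((2 * (univ.filter fun i => x i = true).card : ℕ) : ℝ) = ((2*k+1 : ℕ) : ℝ) := by
      push_cast; linarith
    have := Nat.cast_inj.mp h2
    omega
  have hneg : ∀ x : ι → Bool, majFun (fun i => !(x i)) = - majFun x := by
    intro x
    have hs : ∑ i, pmOfBool (!(x i)) = - ∑ i, pmOfBool (x i) := by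
      rw [← Finset.sum_neg_distrib]
      exact Finset.sum_congr rfl fun i _ => by cases x i <;> simp [pmOfBool]
    by_cases h : 0 < ∑ i, pmOfBool (x i)
    · rw [maj_eq_one x h, maj_eq_neg_one]
      rw [hs]; linarith
    · have hlt : ∑ i, pmOfBool (x i) < 0 := lt_of_le_of_ne (not_lt.mp h) (hne x)
      rw [maj_eq_neg_one x h, maj_eq_one]
      · norm_num
      · rw [hs]; linarith
  have hinv : Function.Involutive (fun x : ι → Bool => fun i => !(x i)) := by
    intro x; funext i; simp
  have := Equiv.sum_comp hinv.toPerm (fun x : ι → Bool => majFun x)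
  have h2 : ∑ x : ι → Bool, majFun (fun i => !(x i)) = ∑ x : ι → Bool, majFun x := this
  rw [Finset.sum_congr rfl (fun x _ => hneg x), Finset.sum_neg_distrib] at h2
  linarith



lemma count_balanced {α : Type*} [Fintype α] [DecidableEq α] (k : ℕ) :
    (Finset.univ.filter fun y : α → Bool =>
      (Finset.univ.filter fun i => y i = true).card = k).card
      = (Fintype.card α).choose k := by
  rw [show (Fintype.card α) = (Finset.univ : Finset α).card from rfl, ← Finset.card_powersetCard k (Finset.univ : Finset α)]
  apply Finset.card_bij (fun y _ => Finset.univ.filter fun i => y i = true)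
  · intro y hy
    simp only [Finset.mem_filter, Finset.mem_univ, true_and] at hy
    simp [Finset.mem_powersetCard, hy]
  · intro y1 h1 y2 h2 he
    funext i
    have := Finset.ext_iff.mp he i
    simp only [Finset.mem_filter, Finset.mem_univ, true_and] at this
    cases hy1 : y1 i <;> cases hy2 : y2 i <;> simp_all
  · intro T hT
    refine ⟨fun i => i ∈ T, ?_, ?_⟩
    · simp only [Finset.mem_filter, Finset.mem_univ, true_and]
      rw [Finset.mem_powersetCard] at hT
      convert hT.2 using 2
      ext i; simp
    · ext i; simp

lemma card_subtype_ne {ι : Type*} [Fintype ι] [DecidableEq ι] (i : ι) :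
    Fintype.card {j // j ≠ i} = Fintype.card ι - 1 := by
  simp [Fintype.card_subtype_compl]

lemma sum_maj_single {ι : Type*} [Fintype ι] [DecidableEq ι] (r : ℕ)
    (hcard : Fintype.card ι = 2*r+1) (i : ι) :
    ∑ x : ι → Bool, majFun x * pmOfBool (x i) = 2 * (Nat.centralBinom r : ℝ) := by
  classical
  set Y := {j // j ≠ i} → Bool
  have hY : Fintype.card {j // j ≠ i} = 2*r := by rw [card_subtype_ne, hcard]; omega
  set e := Equiv.funSplitAt i Bool with he
  have hsum : ∀ (b : Bool) (y : Y),
      ∑ j, pmOfBool ((e.symm (b, y)) j) = pmOfBool b + ∑ j : {j // j ≠ i}, pmOfBool (y j) := by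
    intro b y
    rw [Fintype.sum_eq_add_sum_compl i]
    congr 1
    · simp [e, Equiv.funSplitAt_symm_apply]
    · rw [Finset.sum_subtype (p := fun j => j ≠ i) ({i}ᶜ : Finset ι) (fun j => by simp)
          (fun j => pmOfBool ((e.symm (b, y)) j))]
      apply Finset.sum_congr rfl
      intro j _
      congr 1
      simp [e, Equiv.funSplitAt_symm_apply, j.2]
  have key : ∀ y : Y,
      (∑ b : Bool, majFun (e.symm (b, y)) * pmOfBool ((e.symm (b, y)) i))
        = if (univ.filter fun j => y j = true).card = r then 2 else 0 := by
    intro y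
    have hxi : ∀ b : Bool, (e.symm (b, y)) i = b := by
      intro b; simp [e, Equiv.funSplitAt_symm_apply]
    have hs : ∑ j : {j // j ≠ i}, pmOfBool (y j)
        = 2 * ((univ.filter fun j => y j = true).card : ℝ) - (2*r : ℝ) := by
      rw [sum_pm, hY]; push_cast; ring
    set t := (univ.filter fun j => y j = true).card with ht
    rw [Fintype.sum_bool]
    rcases lt_trichotomy t r with h | h | h
    · rw [if_neg (by omega)]
      have hb : ∀ b : Bool, majFun (e.symm (b, y)) = -1 := by
        intro b
        apply maj_eq_neg_one
        rw [hsum, hs]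
        have : (t:ℝ) + 1 ≤ (r:ℝ) := by exact_mod_cast Nat.succ_le_of_lt h
        cases b <;> simp [pmOfBool] <;> nlinarith
      rw [hb, hb, hxi, hxi]; simp [pmOfBool]
    · rw [if_pos (by omega)]
      have h0 : ∑ j : {j // j ≠ i}, pmOfBool (y j) = 0 := by rw [hs, h]; ring
      have h1 : majFun (e.symm (true, y)) = 1 := by
        apply maj_eq_one; rw [hsum, h0]; simp [pmOfBool]
      have h2 : majFun (e.symm (false, y)) = -1 := by
        apply maj_eq_neg_one; rw [hsum, h0]; simp [pmOfBool]
      rw [h1, h2, hxi, hxi]; norm_num [pmOfBool]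
    · rw [if_neg (by omega)]
      have hb : ∀ b : Bool, majFun (e.symm (b, y)) = 1 := by
        intro b
        apply maj_eq_one
        rw [hsum, hs]
        have : (r:ℝ) + 1 ≤ (t:ℝ) := by exact_mod_cast Nat.succ_le_of_lt h
        cases b <;> simp [pmOfBool] <;> nlinarith
      rw [hb, hb, hxi, hxi]; simp [pmOfBool]
  calc ∑ x : ι → Bool, majFun x * pmOfBool (x i)
      = ∑ p : Bool × Y, majFun (e.symm p) * pmOfBool ((e.symm p) i) :=
        (Equiv.sum_comp e.symm fun x => majFun x * pmOfBool (x i)).symm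
    _ = ∑ y : Y, ∑ b : Bool, majFun (e.symm (b, y)) * pmOfBool ((e.symm (b, y)) i) := by
        rw [Fintype.sum_prod_type]; exact Finset.sum_comm
    _ = ∑ y : Y, (if (univ.filter fun j => y j = true).card = r then (2:ℝ) else 0) :=
        Finset.sum_congr rfl fun y _ => key y
    _ = 2 * (Nat.centralBinom r : ℝ) := by
        rw [Finset.sum_ite, Finset.sum_const, Finset.sum_const_zero, add_zero,
          count_balanced (α := {j // j ≠ i}) r, hY]
        rw [Nat.centralBinom]
        simp [nsmul_eq_mul, mul_comm]

open Finset

lemma filter_card_le_one {ι : Type*} [DecidableEq ι] [Fintype ι] :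
    (univ.filter fun T : Finset ι => T.card ≤ 1)
      = insert ∅ (univ.image fun i : ι => ({i} : Finset ι)) := by
  ext T
  simp only [mem_filter, mem_univ, true_and, mem_insert, mem_image]
  constructor
  · intro h
    rcases Nat.le_one_iff_eq_zero_or_eq_one.mp h with h0 | h1
    · left; exact card_eq_zero.mp h0
    · right; obtain ⟨a, ha⟩ := Finset.card_eq_one.mp h1; exact ⟨a, ha.symm⟩
  · rintro (rfl | ⟨a, -, rfl⟩) <;> simp

lemma weightLE_one_maj {ι : Type*} [Fintype ι] [DecidableEq ι] (r : ℕ)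
    (hcard : Fintype.card ι = 2*r+1) :
    weightLE 1 (majFun (ι := ι)) = (2*r+1 : ℝ) * ((Nat.centralBinom r : ℝ)/4^r)^2 := by
  classical
  unfold weightLE
  rw [filter_card_le_one, Finset.sum_insert (by simp),
    Finset.sum_image (fun a _ b _ h => Finset.singleton_injective h)]
  have hodd : Odd (Fintype.card ι) := by rw [hcard]; exact odd_two_mul_add_one r
  have h0 : fCoeff (majFun (ι := ι)) (∅ : Finset ι) = 0 := by
    unfold fCoeff
    have : ∀ x : ι → Bool, majFun x * chi ∅ x = majFun x := by
      intro x; simp [chi]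
    rw [Finset.sum_congr rfl fun x _ => this x, sum_maj_eq_zero hodd, zero_div]
  have hN : (Fintype.card (ι → Bool) : ℝ) = 2 * 4^r := by
    rw [Fintype.card_fun, Fintype.card_bool, hcard]
    push_cast
    rw [pow_succ, pow_mul]
    norm_num [mul_comm]
  have h1 : ∀ i : ι, fCoeff (majFun (ι := ι)) {i} = (Nat.centralBinom r : ℝ)/4^r := by
    intro i
    unfold fCoeff
    have : ∀ x : ι → Bool, majFun x * chi {i} x = majFun x * pmOfBool (x i) := by
      intro x; simp [chi]
    rw [Finset.sum_congr rfl fun x _ => this x, sum_maj_single r hcard i, hN]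
    rw [mul_div_mul_left _ _ (two_ne_zero)]
  rw [h0]
  simp only [h1, ne_eq, OfNat.ofNat_ne_zero, not_false_eq_true, zero_pow, zero_add,
    Finset.sum_const, card_univ, hcard, nsmul_eq_mul]
  push_cast
  ring

lemma weight_split {ι : Type*} [Fintype ι] [DecidableEq ι] (f : (ι → Bool) → ℝ)
    (h2 : ∀ x, (f x)^2 = 1) : weightLE 1 f + weightGT 1 f = 1 := by
  classical
  unfold weightLE weightGT
  have hfilter : univ.filter (fun T : Finset ι => ¬ T.card ≤ 1)
      = univ.filter (fun T : Finset ι => 1 < T.card) := by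
    apply Finset.filter_congr; intro T _; simp [not_le]
  have hsplit := Finset.sum_filter_add_sum_filter_not univ
    (fun T : Finset ι => T.card ≤ 1) (fun T => (fCoeff f T)^2)
  rw [hfilter] at hsplit
  rw [hsplit, parseval]
  have : ∑ x : ι → Bool, (f x)^2 = (Fintype.card (ι → Bool) : ℝ) := by
    rw [Finset.sum_congr rfl fun x _ => h2 x]
    simp
  rw [this, div_self]
  have : 0 < Fintype.card (ι → Bool) := Fintype.card_pos
  positivity

lemma weightGT_nonneg {ι : Type*} [Fintype ι] [DecidableEq ι] (f : (ι → Bool) → ℝ) :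
    0 ≤ weightGT 1 f :=
  Finset.sum_nonneg fun T _ => sq_nonneg _

lemma weightLE_nonneg {ι : Type*} [Fintype ι] [DecidableEq ι] (f : (ι → Bool) → ℝ) :
    0 ≤ weightLE 1 f :=
  Finset.sum_nonneg fun T _ => sq_nonneg _

lemma weightGT_maj_ge {ι : Type*} [Fintype ι] [DecidableEq ι] (r : ℕ) (hr : 1 ≤ r)
    (hcard : Fintype.card ι = 2*r+1) :
    (1:ℝ)/4 ≤ weightGT 1 (majFun (ι := ι)) := by
  have hsplit := weight_split (majFun (ι := ι)) (fun x => maj_sq x)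
  have hLE := weightLE_one_maj r hcard
  have hub : (2*r+1 : ℝ) * ((Nat.centralBinom r : ℝ)/4^r)^2 ≤ 3/4 := by
    have h16 : ((3*r+1 : ℕ) : ℝ) * ((Nat.centralBinom r : ℝ))^2 ≤ (16:ℝ)^r := by
      have := cb_upper r
      calc ((3*r+1 : ℕ) : ℝ) * ((Nat.centralBinom r : ℝ))^2
          = (((3*r+1) * (Nat.centralBinom r)^2 : ℕ) : ℝ) := by push_cast; ring
        _ ≤ ((16^r : ℕ) : ℝ) := Nat.cast_le.mpr this
        _ = (16:ℝ)^r := by push_cast; ring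
    have h4 : ((4:ℝ)^r)^2 = 16^r := by rw [← pow_mul, mul_comm r 2, pow_mul]; norm_num
    have hpos : (0:ℝ) < 16^r := by positivity
    have hfrac : (2*r+1 : ℝ) * ((Nat.centralBinom r : ℝ)/4^r)^2
        = (2*r+1 : ℝ) * ((Nat.centralBinom r : ℝ))^2 / 16^r := by
      rw [div_pow, h4, mul_div_assoc]
    rw [hfrac, div_le_iff₀ hpos]
    have hr1 : (1:ℝ) ≤ (r:ℝ) := by exact_mod_cast hr
    have key : (2*r+1 : ℝ) * ((Nat.centralBinom r : ℝ))^2 * (3*r+1)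
        ≤ (2*r+1 : ℝ) * (16:ℝ)^r := by
      calc (2*r+1 : ℝ) * ((Nat.centralBinom r : ℝ))^2 * (3*r+1)
          = (2*r+1 : ℝ) * (((3*r+1 : ℕ):ℝ) * ((Nat.centralBinom r : ℝ))^2) := by push_cast; ring
        _ ≤ (2*r+1 : ℝ) * (16:ℝ)^r := by
            apply mul_le_mul_of_nonneg_left h16 (by positivity)
    nlinarith [sq_nonneg ((Nat.centralBinom r : ℝ)), hpos]
  rw [hLE] at hsplit
  linarith

lemma sqrt_one_sub_le (w : ℝ) (h1 : w ≤ 1) : Real.sqrt (1 - w) ≤ 1 - w/2 := by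
  rw [show (1:ℝ) - w/2 = Real.sqrt ((1-w/2)^2) from (Real.sqrt_sq (by linarith)).symm]
  apply Real.sqrt_le_sqrt; nlinarith [sq_nonneg w]

lemma restrict_maj_eq {n : ℕ} (S : Finset (Fin n)) (z : {i // i ∈ Sᶜ} → Bool)
    (hz : ∑ i : {i // i ∈ Sᶜ}, pmOfBool (z i) = 0) :
    restrictTo (majFun (ι := Fin n)) Sᶜ z = majFun := by
  funext y
  show (if 0 < ∑ i : Fin n, pmOfBool (if h : i ∈ Sᶜ then z ⟨i,h⟩ else y ⟨i,h⟩) then (1:ℝ) else -1)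
      = if 0 < ∑ i : {i // i ∉ Sᶜ}, pmOfBool (y i) then 1 else -1
  have hsum : ∑ i : Fin n, pmOfBool (if h : i ∈ Sᶜ then z ⟨i,h⟩ else y ⟨i,h⟩)
      = ∑ i : {i // i ∉ Sᶜ}, pmOfBool (y i) := by
    rw [← Finset.sum_add_sum_compl Sᶜ]
    have h1 : ∑ i ∈ Sᶜ, pmOfBool (if h : i ∈ Sᶜ then z ⟨i,h⟩ else y ⟨i,h⟩)
        = ∑ i : {i // i ∈ Sᶜ}, pmOfBool (z i) := by
      rw [Finset.sum_subtype (p := fun i => i ∈ Sᶜ) Sᶜ (fun i => Iff.rfl)]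
      exact Finset.sum_congr rfl fun i _ => by rw [dif_pos i.2]
    have h2 : ∑ i ∈ (Sᶜ)ᶜ, pmOfBool (if h : i ∈ Sᶜ then z ⟨i,h⟩ else y ⟨i,h⟩)
        = ∑ i : {i // i ∉ Sᶜ}, pmOfBool (y i) := by
      rw [Finset.sum_subtype (p := fun i => i ∉ Sᶜ) ((Sᶜ)ᶜ) (fun i => by simp)]
      exact Finset.sum_congr rfl fun i _ => by rw [dif_neg i.2]
    rw [h1, h2, hz, zero_add]
  rw [hsum]

set_option maxHeartbeats 2000000 in
/-- **Average restricted level-≤1 weight of majority.**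
For odd `n ≥ 3` and `S ⊆ [n]` with `|S| ≥ 3` and `|Sᶜ|` even,
`E_z[√(W^{≤1}[Maj_n|_{Sᶜ,z}])] ≤ 1 − 0.09/√n`. -/
theorem stmt15 (n : ℕ) (hn : 3 ≤ n) (hodd : Odd n) (S : Finset (Fin n))
    (hS : 3 ≤ S.card) (hSc : Even Sᶜ.card) :
    (∑ z : {i // i ∈ Sᶜ} → Bool,
        Real.sqrt (weightLE 1 (restrictTo (majFun (ι := Fin n)) Sᶜ z))) /
      (Fintype.card ({i // i ∈ Sᶜ} → Bool) : ℝ) ≤ 1 - 0.09 / Real.sqrt n := by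
  classical
  set g := fun z : {i // i ∈ Sᶜ} → Bool => restrictTo (majFun (ι := Fin n)) Sᶜ z with hg
  have hcc : Fintype.card {i // i ∈ Sᶜ} = Sᶜ.card := Fintype.card_coe _
  obtain ⟨ℓ0, hℓ0⟩ := hSc
  set ℓ := ℓ0 with hℓdef
  have hSccard : Sᶜ.card = 2*ℓ := by omega
  have hScS : S.card + Sᶜ.card = n := by
    rw [Finset.card_add_card_compl]; simp
  obtain ⟨r, hrr⟩ : ∃ r, S.card = 2*r+1 := by
    obtain ⟨k, hk⟩ := hodd
    exact ⟨(S.card - 1)/2, by omega⟩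
  have hr1 : 1 ≤ r := by omega
  have hcard' : Fintype.card {i // i ∉ Sᶜ} = 2*r+1 := by
    have : Fintype.card {i // i ∉ Sᶜ} = Fintype.card (Fin n) - Fintype.card {i // i ∈ Sᶜ} :=
      Fintype.card_subtype_compl _
    rw [this, hcc, Fintype.card_fin]
    omega
  set N : ℝ := (Fintype.card ({i // i ∈ Sᶜ} → Bool) : ℝ) with hNdef
  have hNcard : Fintype.card ({i // i ∈ Sᶜ} → Bool) = 2^(2*ℓ) := by
    rw [Fintype.card_fun, Fintype.card_bool, hcc, hSccard]
  have hN4 : N = 4^ℓ := by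
    rw [hNdef, hNcard]; push_cast; rw [pow_mul]; norm_num
  have hNpos : (0:ℝ) < N := by rw [hN4]; positivity
  -- per-z facts
  have hsq : ∀ z, ∀ x, ((g z) x)^2 = 1 := fun z x => maj_sq _
  have hsplit : ∀ z, weightLE 1 (g z) + weightGT 1 (g z) = 1 := fun z => weight_split _ (hsq z)
  have hstep : ∀ z, Real.sqrt (weightLE 1 (g z)) ≤ 1 - weightGT 1 (g z)/2 := by
    intro z
    have h1 : weightLE 1 (g z) = 1 - weightGT 1 (g z) := by linarith [hsplit z]
    rw [h1]
    exact sqrt_one_sub_le _ (by linarith [hsplit z, weightLE_nonneg (g z)])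
  -- balanced z's
  set B := Finset.univ.filter
    (fun z : {i // i ∈ Sᶜ} → Bool => (Finset.univ.filter fun i => z i = true).card = ℓ) with hB
  have hBcard : B.card = Nat.centralBinom ℓ := by
    rw [hB, count_balanced, hcc, hSccard, Nat.centralBinom]
  have hBbound : ∀ z ∈ B, (1:ℝ)/4 ≤ weightGT 1 (g z) := by
    intro z hz
    have hbal : ∑ i : {i // i ∈ Sᶜ}, pmOfBool (z i) = 0 := by
      rw [sum_pm, hcc, hSccard]
      rw [hB, Finset.mem_filter] at hz
      rw [hz.2]
      push_cast; ring
    have : g z = majFun := restrict_maj_eq S z hbal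
    rw [this]
    exact weightGT_maj_ge r hr1 hcard'
  have hsumGT : (Nat.centralBinom ℓ : ℝ) * (1/4) ≤ ∑ z, weightGT 1 (g z) := by
    calc (Nat.centralBinom ℓ : ℝ) * (1/4) = ∑ _z ∈ B, (1:ℝ)/4 := by
          rw [Finset.sum_const, hBcard, nsmul_eq_mul]
      _ ≤ ∑ z ∈ B, weightGT 1 (g z) := Finset.sum_le_sum hBbound
      _ ≤ ∑ z, weightGT 1 (g z) :=
          Finset.sum_le_sum_of_subset_of_nonneg (Finset.subset_univ B)
            (fun z _ _ => weightGT_nonneg (g z))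
  have hmain : (∑ z, Real.sqrt (weightLE 1 (g z))) ≤ N - (Nat.centralBinom ℓ : ℝ)/8 := by
    calc (∑ z, Real.sqrt (weightLE 1 (g z))) ≤ ∑ z, (1 - weightGT 1 (g z)/2) :=
          Finset.sum_le_sum fun z _ => hstep z
      _ = N - (∑ z, weightGT 1 (g z))/2 := by
          rw [Finset.sum_sub_distrib, Finset.sum_const, Finset.card_univ, nsmul_eq_mul, mul_one,
            ← Finset.sum_div]
      _ ≤ N - (Nat.centralBinom ℓ : ℝ)/8 := by
          have := hsumGT; linarith
  -- final numerics
  have hn0 : (3:ℝ) ≤ (n:ℝ) := by exact_mod_cast hn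
  have hsn : (0:ℝ) < Real.sqrt n := Real.sqrt_pos.mpr (by linarith)
  have hfin : (0.09:ℝ)/Real.sqrt n ≤ (Nat.centralBinom ℓ : ℝ)/(8*4^ℓ) := by
    rw [div_le_div_iff₀ hsn (by positivity)]
    have h72 : (0.72:ℝ)*4^ℓ ≤ (Nat.centralBinom ℓ : ℝ) * Real.sqrt n := by
      rcases Nat.eq_zero_or_pos ℓ with h0 | h1
      · rw [h0]
        simp only [pow_zero, mul_one, Nat.centralBinom_zero, Nat.cast_one, one_mul]
        have : (1:ℝ) ≤ Real.sqrt n := by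
          rw [show (1:ℝ) = Real.sqrt 1 from (Real.sqrt_one).symm]
          exact Real.sqrt_le_sqrt (by linarith)
        linarith
      · have hcb := cb_lower ℓ h1
        have hcbR : (5:ℝ) * 16^ℓ ≤ (16*ℓ+4) * ((Nat.centralBinom ℓ : ℝ))^2 := by
          calc (5:ℝ) * 16^ℓ = ((5 * 16^ℓ : ℕ) : ℝ) := by push_cast; ring
            _ ≤ (((16*ℓ+4) * (Nat.centralBinom ℓ)^2 : ℕ) : ℝ) := Nat.cast_le.mpr hcb
            _ = (16*ℓ+4) * ((Nat.centralBinom ℓ : ℝ))^2 := by push_cast; ring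
        have hℓn : (16:ℝ)*ℓ + 4 ≤ 8*(n:ℝ) - 20 := by
          have : 2*ℓ + 3 ≤ n := by omega
          have : (2*ℓ + 3 : ℝ) ≤ (n:ℝ) := by exact_mod_cast this
          linarith
        have h16pos : (0:ℝ) < 16^ℓ := by positivity
        have hsq2 : ((0.72:ℝ)*4^ℓ)^2 ≤ ((Nat.centralBinom ℓ : ℝ) * Real.sqrt n)^2 := by
          rw [mul_pow, mul_pow, Real.sq_sqrt (by linarith : (0:ℝ) ≤ (n:ℝ))]
          have h4sq : ((4:ℝ)^ℓ)^2 = 16^ℓ := by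
            rw [← pow_mul, mul_comm ℓ 2, pow_mul]; norm_num
          rw [h4sq]
          have hprod := mul_le_mul_of_nonneg_left hcbR (by linarith : (0:ℝ) ≤ (n:ℝ))
          nlinarith [sq_nonneg ((Nat.centralBinom ℓ : ℝ)), h16pos, hℓn, hn0, hprod]
        have ha : (0:ℝ) ≤ 0.72*4^ℓ := by positivity
        have hb : (0:ℝ) ≤ (Nat.centralBinom ℓ : ℝ) * Real.sqrt n := by positivity
        exact le_of_sq_le_sq hsq2 hb
    linarith [h72]
  rw [div_le_iff₀ hNpos]
  have hexp : (1 - 0.09/Real.sqrt n) * N = N - (0.09/Real.sqrt n) * N := by ring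
  rw [hexp]
  have : (0.09/Real.sqrt n) * N ≤ (Nat.centralBinom ℓ : ℝ)/8 := by
    rw [hN4]
    calc (0.09/Real.sqrt n) * 4^ℓ ≤ ((Nat.centralBinom ℓ : ℝ)/(8*4^ℓ)) * 4^ℓ := by
          apply mul_le_mul_of_nonneg_right hfin (by positivity)
      _ = (Nat.centralBinom ℓ : ℝ)/8 := by
          field_simp
  linarith [hmain]
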